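/- For every reward function R : S → ℝ and every policy π : S → A, the discounted value satisfies the closed form V(R, π) = R(s0) + γ · R(P(s0, π(s0))) / (1 − γ). In particular, the value of a policy depends only on its action at s0. -/
import Mathlib


/-- Deterministic transition function: from `s0 = 0`, action `a : Fin 3`
leads to state `a.succ` (i.e. `a ↦ s1`, `b ↦ s2`, `c ↦ s3`); every other
state is fixed under every action. -/
def P (s : Fin 4) (a : Fin 3) : Fin 4 := if s = 0 then a.succ else s

/-- Trajectory of policy `π` started at `s0 = 0`. -/
def traj (π : Fin 4 → Fin 3) (t : ℕ) : Fin 4 := (fun s => P s (π s))^[t] 0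

/-- Discounted value of policy `π` from `s0 = 0` under reward `R` and discount `γ`. -/
noncomputable def V (R : Fin 4 → ℝ) (γ : ℝ) (π : Fin 4 → Fin 3) : ℝ :=
  ∑' t : ℕ, γ ^ t * R (traj π t)

lemma traj_succ (π : Fin 4 → Fin 3) (t : ℕ) : traj π (t + 1) = (π 0).succ := by
  induction t with
  | zero => simp [traj, P]
  | succ n ih =>
    have : traj π (n + 2) = P (traj π (n + 1)) (π (traj π (n + 1))) := by
      simp [traj, Function.iterate_succ_apply']
    rw [this, ih]
    simp [P, Fin.succ_ne_zero]

theorem value_closed_form (γ : ℝ) (hγ0 : 0 ≤ γ) (hγ1 : γ < 1) :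
    (∀ (R : Fin 4 → ℝ) (π : Fin 4 → Fin 3),
      V R γ π = R 0 + γ * R (P 0 (π 0)) / (1 - γ)) ∧
    (∀ (R : Fin 4 → ℝ) (π π' : Fin 4 → Fin 3),
      π 0 = π' 0 → V R γ π = V R γ π') := by
  have main : ∀ (R : Fin 4 → ℝ) (π : Fin 4 → Fin 3),
      V R γ π = R 0 + γ * R (P 0 (π 0)) / (1 - γ) := by
    intro R π
    set f : ℕ → ℝ := fun t => γ ^ t * R (traj π t) with hf
    obtain ⟨M, hM⟩ : ∃ M, ∀ s : Fin 4, |R s| ≤ M :=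
      ⟨Finset.univ.sup' ⟨0, Finset.mem_univ 0⟩ (fun s => |R s|),
        fun s => Finset.le_sup' (fun s => |R s|) (Finset.mem_univ s)⟩
    have hsum : Summable f := by
      apply Summable.of_norm
      apply Summable.of_nonneg_of_le (fun t => norm_nonneg _)
        (fun t => ?_) ((summable_geometric_of_lt_one hγ0 hγ1).mul_right M)
      calc ‖f t‖ = |γ ^ t| * |R (traj π t)| := abs_mul _ _
        _ ≤ γ ^ t * M := by
            rw [abs_of_nonneg (pow_nonneg hγ0 t)]
            exact mul_le_mul_of_nonneg_left (hM _) (pow_nonneg hγ0 t)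
    have h0 : traj π 0 = 0 := rfl
    have key : V R γ π = f 0 + ∑' t : ℕ, f (t + 1) := Summable.tsum_eq_zero_add hsum
    rw [key]
    have : ∀ t : ℕ, f (t + 1) = γ * R (P 0 (π 0)) * γ ^ t := by
      intro t
      simp only [hf, traj_succ]
      have : P 0 (π 0) = (π 0).succ := by simp [P]
      rw [this]; ring
    rw [tsum_congr this, tsum_mul_left, tsum_geometric_of_lt_one hγ0 hγ1]
    simp only [hf, h0, pow_zero, one_mul]
    field_simp
  exact ⟨main, fun R π π' h => by rw [main R π, main R π', h]⟩
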